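/- arXiv:2104.10206 — 5 statements merged into one kernel-verified Lean document; each statement's English description precedes it below -/
import Mathlib

section
/- For a closure space (X, c), let qd(c) be the quasi-discrete closure qd(c)(A) := ⋃_{x∈A} c({x}). Given a quasi-discrete closure space (X, c) and an arbitrary closure space (Y, d), a set map f : X → Y is continuous as a map (X,c) → (Y, qd(d)) if and only if it is continuous as a map (X,c) → (Y,d). (That is, qd is right adjoint to the inclusion of quasi-discrete closure spaces into closure spaces.) -/
/-- The quasi-discrete modification is right adjoint to the inclusion of
quasi-discrete closure spaces: for (X,c) quasi-discrete, a map f is continuous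
into (Y, qd(d)) iff it is continuous into (Y, d). -/
theorem qd_adjunction {X Y : Type*}
    (c : Set X → Set X) (d : Set Y → Set Y)
    (hc1 : c ∅ = ∅) (hc2 : ∀ A : Set X, A ⊆ c A)
    (hc3 : ∀ A B : Set X, c (A ∪ B) = c A ∪ c B)
    (hcqd : ∀ A : Set X, c A = ⋃ x ∈ A, c {x})
    (hd1 : d ∅ = ∅) (hd2 : ∀ A : Set Y, A ⊆ d A)
    (hd3 : ∀ A B : Set Y, d (A ∪ B) = d A ∪ d B)
    (f : X → Y) :
    (∀ A : Set X, f '' c A ⊆ ⋃ y ∈ f '' A, d {y}) ↔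
    (∀ A : Set X, f '' c A ⊆ d (f '' A)) := by
  have hdmono : ∀ A B : Set Y, A ⊆ B → d A ⊆ d B := by
    intro A B hAB
    have : A ∪ B = B := Set.union_eq_self_of_subset_left hAB
    calc d A ⊆ d A ∪ d B := Set.subset_union_left
      _ = d (A ∪ B) := (hd3 A B).symm
      _ = d B := by rw [this]
  constructor
  · intro h A z hz
    rcases Set.mem_iUnion₂.mp (h A hz) with ⟨y, hy, hzy⟩
    exact hdmono _ _ (Set.singleton_subset_iff.mpr hy) hzy
  · intro h A z hz
    rcases hz with ⟨w, hw, rfl⟩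
    rw [hcqd] at hw
    rcases Set.mem_iUnion₂.mp hw with ⟨x, hx, hwx⟩
    have : f w ∈ d (f '' {x}) := h {x} ⟨w, hwx, rfl⟩
    rw [Set.image_singleton] at this
    exact Set.mem_iUnion₂.mpr ⟨f x, ⟨x, hx, rfl⟩, this⟩
end

section
/- For a quasi-discrete closure space (X, c), define s(c)(A) := ⋃_{x∈A} {y ∈ c({x}) : x ∈ c({y})}. Then s(c) is a quasi-discrete closure operation which is symmetric (y ∈ s(c)({x}) implies x ∈ s(c)({y})), s(c) is finer than c, and for (X,c) symmetric quasi-discrete and (Y,d) quasi-discrete, f : X → Y is continuous from (X,c) to (Y, s(d)) iff it is continuous from (X,c) to (Y,d). -/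
/-- The symmetrization of a quasi-discrete closure operation: it is a symmetric
quasi-discrete closure operation finer than the original, and it is right
adjoint to the inclusion of symmetric quasi-discrete closure spaces. -/
theorem symmetrization {X : Type*} (c : Set X → Set X)
    (hc1 : c ∅ = ∅) (hc2 : ∀ A : Set X, A ⊆ c A)
    (hc3 : ∀ A B : Set X, c (A ∪ B) = c A ∪ c B)
    (hcqd : ∀ A : Set X, c A = ⋃ x ∈ A, c {x}) :
    -- s(c) is a closure operation
    ((⋃ x ∈ (∅ : Set X), {y | y ∈ c {x} ∧ x ∈ c {y}}) = ∅) ∧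
    (∀ A : Set X, A ⊆ ⋃ x ∈ A, {y | y ∈ c {x} ∧ x ∈ c {y}}) ∧
    (∀ A B : Set X, (⋃ x ∈ A ∪ B, {y | y ∈ c {x} ∧ x ∈ c {y}}) =
      (⋃ x ∈ A, {y | y ∈ c {x} ∧ x ∈ c {y}}) ∪ ⋃ x ∈ B, {y | y ∈ c {x} ∧ x ∈ c {y}}) ∧
    -- s(c) is quasi-discrete
    (∀ A : Set X, (⋃ x ∈ A, {y | y ∈ c {x} ∧ x ∈ c {y}}) =
      ⋃ x ∈ A, ⋃ z ∈ ({x} : Set X), {y | y ∈ c {z} ∧ z ∈ c {y}}) ∧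
    -- s(c) is symmetric
    (∀ x y : X, (y ∈ ⋃ z ∈ ({x} : Set X), {w | w ∈ c {z} ∧ z ∈ c {w}}) →
      x ∈ ⋃ z ∈ ({y} : Set X), {w | w ∈ c {z} ∧ z ∈ c {w}}) ∧
    -- s(c) is finer than c
    (∀ A : Set X, (⋃ x ∈ A, {y | y ∈ c {x} ∧ x ∈ c {y}}) ⊆ c A) ∧
    -- adjunction: for (X,c) symmetric quasi-discrete, (Y,d) quasi-discrete,
    -- f : (X,c) → (Y,s(d)) is continuous iff f : (X,c) → (Y,d) is continuous
    ((∀ x y : X, y ∈ c {x} → x ∈ c {y}) →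
      ∀ (Y : Type u_1) (d : Set Y → Set Y), d ∅ = ∅ → (∀ A : Set Y, A ⊆ d A) →
        (∀ A B : Set Y, d (A ∪ B) = d A ∪ d B) →
        (∀ A : Set Y, d A = ⋃ y ∈ A, d {y}) →
        ∀ f : X → Y,
          ((∀ A : Set X, f '' c A ⊆ ⋃ y ∈ f '' A, {z | z ∈ d {y} ∧ y ∈ d {z}}) ↔
            (∀ A : Set X, f '' c A ⊆ d (f '' A)))) := by

  refine ⟨by simp, ?_, ?_, ?_, ?_, ?_, ?_⟩
  · intro A x hx
    exact Set.mem_biUnion hx ⟨hc2 {x} rfl, hc2 {x} rfl⟩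
  · intro A B
    rw [Set.biUnion_union]
  · intro A
    simp
  · intro x y hy
    simp only [Set.mem_iUnion, Set.mem_singleton_iff, Set.mem_setOf_eq] at hy ⊢
    obtain ⟨z, rfl, h1, h2⟩ := hy
    exact ⟨y, rfl, h2, h1⟩
  · intro A y hy
    simp only [Set.mem_iUnion, Set.mem_setOf_eq] at hy
    obtain ⟨x, hxA, h1, _⟩ := hy
    rw [hcqd A]
    exact Set.mem_biUnion hxA h1
  · intro hsym Y d hd1 hd2 hd3 hdqd f
    constructor
    · intro h A z hz
      have := h A hz
      simp only [Set.mem_iUnion, Set.mem_setOf_eq] at this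
      obtain ⟨y, hyA, h1, _⟩ := this
      rw [hdqd (f '' A)]
      exact Set.mem_biUnion hyA h1
    · intro h A z hz
      obtain ⟨x', hx', rfl⟩ := hz
      rw [hcqd A] at hx'
      simp only [Set.mem_iUnion] at hx'
      obtain ⟨x, hxA, hx'c⟩ := hx'
      have h1 : f x' ∈ d {f x} := by
        have := h {x} ⟨x', hx'c, rfl⟩
        rwa [Set.image_singleton] at this
      have h2 : f x ∈ d {f x'} := by
        have := h {x'} ⟨x, hsym x x' hx'c, rfl⟩
        rwa [Set.image_singleton] at this
      simp only [Set.mem_iUnion, Set.mem_setOf_eq]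
      exact ⟨f x, ⟨x, hxA, rfl⟩, h1, h2⟩
end

section
/- Let J_m denote the set {0,…,m} with the quasi-discrete closure c(A) = {j : ∃ i ∈ A, |i − j| ≤ 1}, and let [0,m] carry the closure c₁(A) = {x ∈ [0,m] : ∃ a ∈ A, |x − a| ≤ 1}. Then J_m is a retract of ([0,m], c₁): the inclusion i : J_m → [0,m] and the nearest-integer rounding map r : [0,m] → J_m (rounding up at ties) are both continuous, and r ∘ i = id. -/
/-- The discrete interval `J_m = {0,…,m}` with closure `c(A) = {j : ∃ i ∈ A, |i-j| ≤ 1}`. -/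
def Jm (m : ℕ) : Type := {i : ℕ // i ≤ m}

/-- The real interval `[0,m]`. -/
def Im (m : ℕ) : Type := {x : ℝ // 0 ≤ x ∧ x ≤ (m : ℝ)}

/-- The closure operation on `J_m`. -/
def cJ (m : ℕ) (A : Set (Jm m)) : Set (Jm m) :=
  {j | ∃ i ∈ A, |(i.1 : ℤ) - (j.1 : ℤ)| ≤ 1}

/-- The thickening closure `c₁` on `[0,m]`. -/
def cI (m : ℕ) (A : Set (Im m)) : Set (Im m) :=
  {x | ∃ a ∈ A, |x.1 - a.1| ≤ 1}

/-- The inclusion `J_m → [0,m]`. -/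
def inclJ (m : ℕ) : Jm m → Im m :=
  fun i => ⟨(i.1 : ℝ), ⟨Nat.cast_nonneg _, by exact_mod_cast i.2⟩⟩

/-- The nearest-integer rounding map `[0,m] → J_m`, rounding up at ties. -/
noncomputable def rndJ (m : ℕ) : Im m → Jm m :=
  fun x => ⟨(⌊x.1 + 1 / 2⌋).toNat, by
    rw [Int.toNat_le]
    have h : x.1 + 1 / 2 < (m : ℝ) + 1 := by
      have := x.2.2; linarith
    have := Int.floor_lt.mpr (by exact_mod_cast h : x.1 + 1 / 2 < ((m + 1 : ℤ) : ℝ))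
    omega⟩

/-- `J_m` is a retract of `([0,m], c₁)`: the inclusion and the rounding map are
continuous and their composite is the identity. -/
theorem Jm_retract_of_interval (m : ℕ) :
    (∀ A : Set (Jm m), inclJ m '' cJ m A ⊆ cI m (inclJ m '' A)) ∧
    (∀ A : Set (Im m), rndJ m '' cI m A ⊆ cJ m (rndJ m '' A)) ∧
    (∀ i : Jm m, rndJ m (inclJ m i) = i) := by

  refine ⟨?_, ?_, ?_⟩
  · rintro A x ⟨j, ⟨i, hiA, hij⟩, rfl⟩
    refine ⟨inclJ m i, ⟨i, hiA, rfl⟩, ?_⟩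
    simp only [inclJ]
    have : |((j.1 : ℤ) : ℝ) - ((i.1 : ℤ) : ℝ)| ≤ 1 := by
      rw [← abs_sub_comm] at hij
      exact_mod_cast hij
    push_cast at this ⊢
    linarith [abs_sub_comm ((j.1:ℝ)) ((i.1:ℝ)) ▸ this]
  · rintro A y ⟨x, ⟨a, haA, hx⟩, rfl⟩
    refine ⟨rndJ m a, ⟨a, haA, rfl⟩, ?_⟩
    simp only [rndJ]
    have ha0 : (0:ℤ) ≤ ⌊a.1 + 1/2⌋ := Int.le_floor.mpr (by push_cast; linarith [a.2.1])
    have hx0 : (0:ℤ) ≤ ⌊x.1 + 1/2⌋ := Int.le_floor.mpr (by push_cast; linarith [x.2.1])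
    rw [Int.toNat_of_nonneg ha0, Int.toNat_of_nonneg hx0]
    have h1 : a.1 + 1/2 ≤ x.1 + 1/2 + 1 := by
      have := abs_le.mp hx; linarith [this.1, this.2]
    have h2 : x.1 + 1/2 ≤ a.1 + 1/2 + 1 := by
      have := abs_le.mp hx; linarith [this.1, this.2]
    have hu : ⌊a.1 + 1/2⌋ ≤ ⌊x.1 + 1/2⌋ + 1 := by
      have := Int.floor_le_floor h1
      rwa [show x.1 + 1/2 + 1 = (x.1 + 1/2) + (1:ℤ) by push_cast; ring, Int.floor_add_intCast] at this
    have hl : ⌊x.1 + 1/2⌋ ≤ ⌊a.1 + 1/2⌋ + 1 := by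
      have := Int.floor_le_floor h2
      rwa [show a.1 + 1/2 + 1 = (a.1 + 1/2) + (1:ℤ) by push_cast; ring, Int.floor_add_intCast] at this
    rw [abs_le]; omega
  · intro i
    simp only [rndJ, inclJ]
    have h : ⌊(i.1 : ℝ) + 1/2⌋ = (i.1 : ℤ) := by
      rw [Int.floor_eq_iff]
      constructor <;> push_cast <;> linarith
    apply Subtype.ext
    show (⌊(i.1 : ℝ) + 1/2⌋).toNat = i.1
    rw [h, Int.toNat_natCast]
end

section
/- Let f, g : (X, c) → (Y, d) be maps of closure spaces. Then f and g are one-step (J₁, ×)-homotopic if and only if for all A ⊆ X, f(c(A)) ∪ g(c(A)) ⊆ d(f(A)) ∩ d(g(A)). Here a one-step (J₁, ×)-homotopy is a continuous map H : X × J₁ → Y with H(·,0) = f and H(·,1) = g, where J₁ is {0,1} with the indiscrete closure and X × J₁ carries the product closure: (x, i) ∈ (c × e)(A) iff every set U × {0,1} with U a neighborhood of x meets A, which for J₁ indiscrete amounts to (c × e)(A) = c(π_X(A)) × {0,1} for nonempty A. -/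
/-- Characterization of one-step (J₁,×)-homotopy: continuous maps f, g are
one-step (J₁,×)-homotopic iff for all A, f(c(A)) ∪ g(c(A)) ⊆ d(f(A)) ∩ d(g(A)).
Here J₁ = {0,1} with the indiscrete closure, and the product closure on X × J₁
is (c × e)(A) = {p | p.1 ∈ c(π_X(A))}. -/
theorem one_step_J1_times_homotopy_iff {X Y : Type*}
    (c : Set X → Set X) (d : Set Y → Set Y)
    (hc1 : c ∅ = ∅) (hc2 : ∀ A : Set X, A ⊆ c A)
    (hc3 : ∀ A B : Set X, c (A ∪ B) = c A ∪ c B)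
    (hd1 : d ∅ = ∅) (hd2 : ∀ A : Set Y, A ⊆ d A)
    (hd3 : ∀ A B : Set Y, d (A ∪ B) = d A ∪ d B)
    (f g : X → Y)
    (hf : ∀ A : Set X, f '' c A ⊆ d (f '' A))
    (hg : ∀ A : Set X, g '' c A ⊆ d (g '' A)) :
    (∃ H : X × Fin 2 → Y,
      (∀ x : X, H (x, 0) = f x) ∧ (∀ x : X, H (x, 1) = g x) ∧
      (∀ A : Set (X × Fin 2),
        H '' {p : X × Fin 2 | p.1 ∈ c (Prod.fst '' A)} ⊆ d (H '' A))) ↔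
    (∀ A : Set X, f '' c A ∪ g '' c A ⊆ d (f '' A) ∩ d (g '' A)) := by
  have hdmono : ∀ {A B : Set Y}, A ⊆ B → d A ⊆ d B := by
    intro A B hAB
    have : d B = d A ∪ d B := by rw [← hd3, Set.union_eq_self_of_subset_left hAB]
    rw [this]; exact Set.subset_union_left
  constructor
  · rintro ⟨H, hH0, hH1, hHcont⟩ A y hy
    have hy' : ∀ (i : Fin 2) (A' : Set (X × Fin 2)), Prod.fst '' A' = A →
        y ∈ H '' {p : X × Fin 2 | p.1 ∈ c (Prod.fst '' A')} := by
      intro i A' hA'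
      rw [hA']
      rcases hy with ⟨x, hx, rfl⟩ | ⟨x, hx, rfl⟩
      · exact ⟨(x, 0), hx, hH0 x⟩
      · exact ⟨(x, 1), hx, hH1 x⟩
    constructor
    · have hfst : Prod.fst '' ({p : X × Fin 2 | p.1 ∈ A ∧ p.2 = 0}) = A := by
        ext x
        constructor
        · rintro ⟨p, ⟨hp, _⟩, rfl⟩; exact hp
        · intro hx; exact ⟨(x, 0), ⟨hx, rfl⟩, rfl⟩
      have hHA : H '' ({p : X × Fin 2 | p.1 ∈ A ∧ p.2 = 0}) = f '' A := by
        ext z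
        constructor
        · rintro ⟨⟨x, i⟩, ⟨hx, hi⟩, rfl⟩
          simp only at hi; subst hi
          exact ⟨x, hx, (hH0 x).symm⟩
        · rintro ⟨x, hx, rfl⟩; exact ⟨(x, 0), ⟨hx, rfl⟩, hH0 x⟩
      have key := hHcont {p : X × Fin 2 | p.1 ∈ A ∧ p.2 = 0}
      rw [hHA] at key
      exact key (hy' 0 _ hfst)
    · have hfst : Prod.fst '' ({p : X × Fin 2 | p.1 ∈ A ∧ p.2 = 1}) = A := by
        ext x
        constructor
        · rintro ⟨p, ⟨hp, _⟩, rfl⟩; exact hp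
        · intro hx; exact ⟨(x, 1), ⟨hx, rfl⟩, rfl⟩
      have hHA : H '' ({p : X × Fin 2 | p.1 ∈ A ∧ p.2 = 1}) = g '' A := by
        ext z
        constructor
        · rintro ⟨⟨x, i⟩, ⟨hx, hi⟩, rfl⟩
          simp only at hi; subst hi
          exact ⟨x, hx, (hH1 x).symm⟩
        · rintro ⟨x, hx, rfl⟩; exact ⟨(x, 1), ⟨hx, rfl⟩, hH1 x⟩
      have key := hHcont {p : X × Fin 2 | p.1 ∈ A ∧ p.2 = 1}
      rw [hHA] at key
      exact key (hy' 1 _ hfst)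
  · intro h
    refine ⟨fun p => if p.2 = 0 then f p.1 else g p.1, fun x => by simp, fun x => by simp, ?_⟩
    intro A
    set A0 : Set X := {x | (x, 0) ∈ A} with hA0def
    set A1 : Set X := {x | (x, 1) ∈ A} with hA1def
    have hfst : Prod.fst '' A = A0 ∪ A1 := by
      ext x
      constructor
      · rintro ⟨⟨x', i⟩, hp, rfl⟩
        fin_cases i
        · exact Or.inl hp
        · exact Or.inr hp
      · rintro (hx | hx)
        · exact ⟨(x, 0), hx, rfl⟩
        · exact ⟨(x, 1), hx, rfl⟩
    have hfA0 : f '' A0 ⊆ (fun p : X × Fin 2 => if p.2 = 0 then f p.1 else g p.1) '' A := by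
      rintro y ⟨x, hx, rfl⟩; exact ⟨(x, 0), hx, by simp⟩
    have hgA1 : g '' A1 ⊆ (fun p : X × Fin 2 => if p.2 = 0 then f p.1 else g p.1) '' A := by
      rintro y ⟨x, hx, rfl⟩; exact ⟨(x, 1), hx, by simp⟩
    rintro y ⟨⟨x, i⟩, hx, rfl⟩
    simp only [Set.mem_setOf_eq, hfst, hc3] at hx
    fin_cases i
    · simp only [if_pos rfl]
      rcases hx with hx | hx
      · exact hdmono hfA0 ((h A0 (Or.inl ⟨x, hx, rfl⟩)).1)
      · exact hdmono hgA1 ((h A1 (Or.inl ⟨x, hx, rfl⟩)).2)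
    · simp only [show ((1 : Fin 2) = 0) = False by simp, if_false]
      rcases hx with hx | hx
      · exact hdmono hfA0 ((h A0 (Or.inr ⟨x, hx, rfl⟩)).1)
      · exact hdmono hgA1 ((h A1 (Or.inr ⟨x, hx, rfl⟩)).2)
end

section
/- Let (X, E) be an abstract simplicial complex and for A ⊆ X define G(E)(A) to be the union of A with all simplices σ ∈ E that intersect A. Then G(E) is a Čech closure operation on X. Moreover, for closure space (Y, c) and set map f : X → Y, f : (X, G(E)) → (Y, c) is continuous if and only if f : (X, E) → (Y, VR(c)) is a simplicial map (i.e., f(σ) ∈ VR(c) for every σ ∈ E), where VR(c) is the set of nonempty finite σ ⊆ Y with σ ⊆ c({y}) for every y ∈ σ. -/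
/-- The Vietoris–Rips complex of a closure space: nonempty finite subsets σ
with σ ⊆ c({x}) for every x ∈ σ. -/
def VR {Y : Type*} (c : Set Y → Set Y) : Set (Set Y) :=
  {σ | σ.Nonempty ∧ σ.Finite ∧ ∀ y ∈ σ, σ ⊆ c {y}}

/-- The closure operation induced by a simplicial complex E: G(E)(A) is the
union of A with all simplices meeting A. -/
def GE {X : Type*} (E : Set (Set X)) (A : Set X) : Set X :=
  A ∪ ⋃₀ {σ | σ ∈ E ∧ (σ ∩ A).Nonempty}

/-- G(E) is a Čech closure operation, and f : (X, G(E)) → (Y, c) is continuous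
iff f : (X, E) → (Y, VR(c)) is a simplicial map. -/
theorem GE_closure_and_adjunction {X Y : Type*}
    (E : Set (Set X))
    (hE1 : ∀ σ ∈ E, σ.Nonempty ∧ σ.Finite)
    (hE2 : ∀ x : X, ({x} : Set X) ∈ E)
    (hE3 : ∀ σ ∈ E, ∀ τ : Set X, τ.Nonempty → τ ⊆ σ → τ ∈ E)
    (c : Set Y → Set Y)
    (hc1 : c ∅ = ∅) (hc2 : ∀ A : Set Y, A ⊆ c A)
    (hc3 : ∀ A B : Set Y, c (A ∪ B) = c A ∪ c B)
    (f : X → Y) :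
    (GE E ∅ = ∅) ∧
    (∀ A : Set X, A ⊆ GE E A) ∧
    (∀ A B : Set X, GE E (A ∪ B) = GE E A ∪ GE E B) ∧
    ((∀ A : Set X, f '' GE E A ⊆ c (f '' A)) ↔ (∀ σ ∈ E, f '' σ ∈ VR c)) := by
  have hmono : ∀ A B : Set Y, A ⊆ B → c A ⊆ c B := by
    intro A B hAB
    have : c B = c A ∪ c B := by rw [← hc3, Set.union_eq_self_of_subset_left hAB]
    rw [this]; exact Set.subset_union_left
  refine ⟨?_, ?_, ?_, ?_⟩
  · simp [GE]
  · intro A; exact Set.subset_union_left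
  · intro A B
    ext x
    simp only [GE, Set.mem_union, Set.mem_sUnion, Set.mem_setOf_eq]
    constructor
    · rintro (⟨hx | hx⟩ | ⟨σ, ⟨hσE, a, haσ, ha | ha⟩, hxσ⟩)
      · exact Or.inl (Or.inl hx)
      · exact Or.inr (Or.inl hx)
      · exact Or.inl (Or.inr ⟨σ, ⟨hσE, a, haσ, ha⟩, hxσ⟩)
      · exact Or.inr (Or.inr ⟨σ, ⟨hσE, a, haσ, ha⟩, hxσ⟩)
    · rintro ((hx | ⟨σ, ⟨hσE, a, haσ, ha⟩, hxσ⟩) | (hx | ⟨σ, ⟨hσE, a, haσ, ha⟩, hxσ⟩))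
      · exact Or.inl (Or.inl hx)
      · exact Or.inr ⟨σ, ⟨hσE, a, haσ, Or.inl ha⟩, hxσ⟩
      · exact Or.inl (Or.inr hx)
      · exact Or.inr ⟨σ, ⟨hσE, a, haσ, Or.inr ha⟩, hxσ⟩
  · constructor
    · intro hcont σ hσ
      refine ⟨(hE1 σ hσ).1.image f, (hE1 σ hσ).2.image f, ?_⟩
      rintro y ⟨x, hxσ, rfl⟩
      have hsub : σ ⊆ GE E {x} :=
        fun z hz => Or.inr ⟨σ, ⟨hσ, x, hxσ, rfl⟩, hz⟩
      calc f '' σ ⊆ f '' GE E {x} := Set.image_mono (f := f) hsub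
        _ ⊆ c (f '' {x}) := hcont {x}
        _ = c {f x} := by rw [Set.image_singleton]
    · intro hsimp A
      rintro y ⟨x, hx | ⟨σ, ⟨hσE, a, haσ, haA⟩, hxσ⟩, rfl⟩
      · exact hc2 _ ⟨x, hx, rfl⟩
      · have h := (hsimp σ hσE).2.2 (f a) ⟨a, haσ, rfl⟩ ⟨x, hxσ, rfl⟩
        exact hmono {f a} (f '' A) (by simp [Set.singleton_subset_iff]; exact ⟨a, haA, rfl⟩) h
end
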